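/- Let f ∈ ℂ[x₁,…,xₙ] be a stable multiaffine polynomial and let ε > 0. Then there exists a multiaffine polynomial g ∈ ℂ[x₁,…,xₙ] such that: (i) g is stable; (ii) every coefficient of f − g has absolute value less than ε; (iii) for every k, if f has no monomial of total degree k in its support then g has no monomial of total degree k in its support; and (iv) for every k, if f has some monomial of total degree k in its support, then every multiaffine monomial x^S with |S| = k (S ⊆ [n]) lies in the support of g. -/

import Mathlib

open MvPolynomial

noncomputable section

/-- A multivariate polynomial over `ℂ` is *stable* if it is identically zero or has no zeros
in the product of upper half planes. -/
def IsStable {σ : Type*} (f : MvPolynomial σ ℂ) : Prop :=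
  f = 0 ∨ ∀ u : σ → ℂ, (∀ i, 0 < (u i).im) → MvPolynomial.eval u f ≠ 0

/-- A polynomial is multiaffine if it has degree at most one in each variable. -/
def MultiAffine {n : ℕ} (f : MvPolynomial (Fin n) ℂ) : Prop :=
  ∀ i, f.degreeOf i ≤ 1

/-- The exponent vector of the multiaffine monomial `x^S`. -/
def expOf {n : ℕ} (S : Finset (Fin n)) : Fin n →₀ ℕ := ∑ i ∈ S, Finsupp.single i 1

open Complex ComplexConjugate


lemma expOf_apply {n : ℕ} (S : Finset (Fin n)) (k : Fin n) :
    expOf S k = if k ∈ S then 1 else 0 := by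
  classical
  simp [expOf, Finsupp.finset_sum_apply, Finsupp.single_apply, Finset.sum_ite_eq]
lemma sum_expOf {n : ℕ} (S : Finset (Fin n)) : (∑ k, expOf S k) = S.card := by
  classical
  simp [expOf_apply]
lemma support_expOf {n : ℕ} (S : Finset (Fin n)) : (expOf S).support = S := by
  classical
  ext k; simp [Finsupp.mem_support_iff, expOf_apply]
lemma eq_expOf_support {n : ℕ} (m : Fin n →₀ ℕ) (hm : ∀ k, m k ≤ 1) :
    m = expOf m.support := by
  classical
  ext k
  rw [expOf_apply]
  by_cases h : k ∈ m.support
  · have h1 : m k ≠ 0 := Finsupp.mem_support_iff.mp h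
    have := hm k
    simp only [h, if_true]; omega
  · have h1 : m k = 0 := Finsupp.notMem_support_iff.mp h
    simp [h, h1]
lemma sum_eq_card_support {n : ℕ} (m : Fin n →₀ ℕ) (hm : ∀ k, m k ≤ 1) :
    (∑ k, m k) = m.support.card := by
  classical
  conv_lhs => rw [eq_expOf_support m hm]
  rw [sum_expOf]


lemma lemA (a b c d : ℂ) (θ : ℝ) (hθ0 : 0 ≤ θ) (hθ1 : θ ≤ 1)
    (h : ∀ z w : ℂ, 0 < z.im → 0 < w.im → a + b*z + c*w + d*(z*w) ≠ 0)
    (z w : ℂ) (hz : 0 < z.im) (hw : 0 < w.im) :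
    a + ((1-θ:ℝ)*b + (θ:ℝ)*c)*z + ((θ:ℝ)*b + (1-θ:ℝ)*c)*w + d*(z*w) ≠ 0 := by
  intro heq
  set b' : ℂ := (1-θ:ℝ)*b + (θ:ℝ)*c with hb'
  set c' : ℂ := (θ:ℝ)*b + (1-θ:ℝ)*c with hc'
  set P1 : ℝ := ((a + c*w) * conj (b + d*w)).im with hP1
  set P2 : ℝ := ((a + b*w) * conj (c + d*w)).im with hP2
  set P' : ℝ := ((a + c'*w) * conj (b' + d*w)).im with hP'
  have key : P' = (1-θ)*P1 + θ*P2 + θ*(1-θ)*Complex.normSq (b-c) * w.im := by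
    simp only [hP1, hP2, hP', hb', hc', Complex.normSq_apply, Complex.mul_im, Complex.add_re,
      Complex.add_im, Complex.mul_re, Complex.sub_re, Complex.sub_im, Complex.conj_re,
      Complex.conj_im, Complex.ofReal_re, Complex.ofReal_im, Complex.one_re, Complex.one_im]
    ring
  have heq' : (a + c'*w) + z * (b' + d*w) = 0 := by rw [← heq]; ring
  have hP'le : P' ≤ 0 := by
    by_cases hbd : b' + d*w = 0
    · have h0 : a + c'*w = 0 := by
        have := heq'; rw [hbd, mul_zero, add_zero] at this; exact this
      simp [hP', h0]
    · have hzval : a + c'*w = -z * (b' + d*w) := by linear_combination heq'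
      have e1 : P' = -(z.im) * Complex.normSq (b' + d*w) := by
        rw [hP', hzval]
        have e2 : -z * (b' + d*w) * conj (b' + d*w) = -z * ((Complex.normSq (b' + d*w) : ℝ)) := by
          rw [mul_assoc, Complex.mul_conj]
        rw [e2]
        simp [Complex.mul_im]
      rw [e1]
      have := Complex.normSq_pos.mpr hbd
      nlinarith
  by_cases h1 : P1 < 0
  · have hbd : b + d*w ≠ 0 := by
      intro h0; rw [hP1, h0] at h1; simp at h1
    set zt : ℂ := -(a + c*w)/(b + d*w) with hzt
    have him : zt.im = -P1 / Complex.normSq (b + d*w) := by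
      rw [hzt, Complex.div_im, hP1]
      simp only [Complex.mul_im, Complex.neg_im, Complex.neg_re, Complex.conj_re,
        Complex.conj_im, Complex.add_re, Complex.add_im, Complex.mul_re]
      ring
    have hpos : 0 < zt.im := by
      rw [him]
      apply div_pos (by linarith) (Complex.normSq_pos.mpr hbd)
    refine h zt w hpos hw ?_
    rw [hzt]
    linear_combination (-(a + c*w)) * mul_inv_cancel₀ hbd
  · by_cases h2 : P2 < 0
    · have hcd : c + d*w ≠ 0 := by
        intro h0; rw [hP2, h0] at h2; simp at h2
      set wt : ℂ := -(a + b*w)/(c + d*w) with hwt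
      have him : wt.im = -P2 / Complex.normSq (c + d*w) := by
        rw [hwt, Complex.div_im, hP2]
        simp only [Complex.mul_im, Complex.neg_im, Complex.neg_re, Complex.conj_re,
          Complex.conj_im, Complex.add_re, Complex.add_im, Complex.mul_re]
        ring
      have hpos : 0 < wt.im := by
        rw [him]
        apply div_pos (by linarith) (Complex.normSq_pos.mpr hcd)
      refine h w wt hw hpos ?_
      rw [hwt]
      linear_combination (-(a + b*w)) * mul_inv_cancel₀ hcd
    · push_neg at h1 h2
      have t1 : 0 ≤ (1-θ)*P1 := mul_nonneg (by linarith) h1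
      have t2 : 0 ≤ θ*P2 := mul_nonneg hθ0 h2
      have t3 : 0 ≤ θ*(1-θ)*Complex.normSq (b-c) * w.im := by
        apply mul_nonneg (mul_nonneg (mul_nonneg hθ0 (by linarith)) (Complex.normSq_nonneg _))
        linarith
      have hzero : θ*(1-θ)*Complex.normSq (b-c) * w.im = 0 := by linarith
      have hcase : θ = 0 ∨ θ = 1 ∨ b = c := by
        rcases mul_eq_zero.mp hzero with h3 | h3
        · rcases mul_eq_zero.mp h3 with h4 | h4
          · rcases mul_eq_zero.mp h4 with h5 | h5
            · exact Or.inl h5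
            · exact Or.inr (Or.inl (by linarith))
          · exact Or.inr (Or.inr (by rwa [Complex.normSq_eq_zero, sub_eq_zero] at h4))
        · linarith
      rcases hcase with h3 | h3 | h3
      · refine h z w hz hw ?_
        rw [← heq, hb', hc', h3]
        push_cast
        ring
      · refine h w z hw hz ?_
        rw [← heq, hb', hc', h3]
        push_cast
        ring
      · refine h z w hz hw ?_
        rw [← heq, hb', hc', h3]
        push_cast
        ring


lemma eval_update_affine {n : ℕ} (f : MvPolynomial (Fin n) ℂ) (i : Fin n)
    (hf : ∀ m ∈ f.support, m i ≤ 1) (u : Fin n → ℂ) (z : ℂ) :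
    eval (Function.update u i z) f =
      eval (Function.update u i 0) f +
        z * (eval (Function.update u i 1) f - eval (Function.update u i 0) f) := by
  classical
  rw [eval_eq', eval_eq', eval_eq', ← Finset.sum_sub_distrib, Finset.mul_sum,
    ← Finset.sum_add_distrib]
  refine Finset.sum_congr rfl fun d hd => ?_
  have key : ∀ y : ℂ, (∏ k, Function.update u i y k ^ d k) =
      y ^ d i * ∏ k ∈ Finset.univ.erase i, u k ^ d k := by
    intro y
    rw [← Finset.mul_prod_erase Finset.univ _ (Finset.mem_univ i)]
    simp only [Function.update_self]
    congr 1
    refine Finset.prod_congr rfl fun k hk => ?_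
    rw [Function.update_of_ne (Finset.mem_erase.mp hk).1]
  rw [key, key, key]
  rcases Nat.le_one_iff_eq_zero_or_eq_one.mp (hf d hd) with h | h <;> simp [h] <;> ring


lemma comb {n : ℕ} (A : Finset (Finset (Fin n))) :
    ∀ (dd : ℕ) (S' S : Finset (Fin n)), (S' \ S).card ≤ dd → S'.card = S.card →
      S' ∈ A → S ∉ A →
    ∃ (T' T : Finset (Fin n)) (i j : Fin n), T' ∈ A ∧ T ∉ A ∧ T'.card = S.card ∧
      T.card = S.card ∧ i ∈ T' ∧ j ∉ T' ∧ i ∉ T ∧ j ∈ T ∧ i ≠ j ∧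
      T = insert j (T'.erase i) := by
  classical
  intro dd
  induction dd with
  | zero =>
    intro S' S hcard hcc hS' hS
    exfalso
    have hsub : S' ⊆ S := by
      rw [← Finset.sdiff_eq_empty_iff_subset]
      exact Finset.card_eq_zero.mp (Nat.le_zero.mp hcard)
    have : S' = S := Finset.eq_of_subset_of_card_le hsub (le_of_eq hcc.symm)
    exact hS (this ▸ hS')
  | succ dd ih =>
    intro S' S hcard hcc hS' hS
    have hne : S' ≠ S := fun hh => hS (hh ▸ hS')
    have h1 : (S' \ S).Nonempty := by
      rw [Finset.sdiff_nonempty]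
      intro hsub
      exact hne (Finset.eq_of_subset_of_card_le hsub (le_of_eq hcc.symm))
    have h2 : (S \ S').Nonempty := by
      rw [Finset.sdiff_nonempty]
      intro hsub
      exact hne (Finset.eq_of_subset_of_card_le hsub (le_of_eq hcc)).symm
    obtain ⟨i, hi⟩ := h1
    obtain ⟨j, hj⟩ := h2
    rw [Finset.mem_sdiff] at hi hj
    have hij : i ≠ j := fun hh => hi.2 (hh ▸ hj.1)
    set S'' := insert j (S'.erase i) with hS''
    have hjS' : j ∉ S'.erase i := fun hh => hj.2 (Finset.mem_of_mem_erase hh)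
    have hcard'' : S''.card = S.card := by
      rw [hS'', Finset.card_insert_of_notMem hjS', Finset.card_erase_of_mem hi.1, ← hcc]
      have : 1 ≤ S'.card := Finset.card_pos.mpr ⟨i, hi.1⟩
      omega
    by_cases hmem : S'' ∈ A
    · -- recurse
      have hdiff : S'' \ S = (S' \ S).erase i := by
        ext a
        simp only [hS'', Finset.mem_sdiff, Finset.mem_insert, Finset.mem_erase]
        constructor
        · rintro ⟨ha1 | ha1, ha2⟩
          · exact absurd (ha1 ▸ hj.1) ha2
          · exact ⟨ha1.1, ha1.2, ha2⟩
        · rintro ⟨ha1, ha2, ha3⟩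
          exact ⟨Or.inr ⟨ha1, ha2⟩, ha3⟩
      have hle : (S'' \ S).card ≤ dd := by
        rw [hdiff, Finset.card_erase_of_mem (Finset.mem_sdiff.mpr hi)]
        omega
      exact ih S'' S hle hcard'' hmem hS
    · exact ⟨S', S'', i, j, hS', hmem, hcc, hcard'', hi.1,
        fun hh => hj.2 hh, fun hh => by
          rw [hS''] at hh
          rcases Finset.mem_insert.mp hh with hh | hh
          · exact hij hh
          · exact (Finset.notMem_erase i S') hh,
        Finset.mem_insert_self j _, hij, rfl⟩


lemma coeff_rename_swap {n : ℕ} (i j : Fin n) (h : MvPolynomial (Fin n) ℂ) (m : Fin n →₀ ℕ) :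
    coeff m (rename (Equiv.swap i j) h)
      = coeff (Finsupp.equivMapDomain (Equiv.swap i j) m) h := by
  classical
  have h1 : Finsupp.mapDomain (⇑(Equiv.swap i j))
      (Finsupp.equivMapDomain (Equiv.swap i j).symm m) = m := by
    rw [← Finsupp.equivMapDomain_eq_mapDomain]
    ext k
    simp
  conv_lhs => rw [← h1]
  rw [coeff_rename_mapDomain _ (Equiv.swap i j).injective, Equiv.symm_swap]

lemma sum_equivMapDomain {n : ℕ} (σ : Equiv.Perm (Fin n)) (m : Fin n →₀ ℕ) :
    (∑ k, Finsupp.equivMapDomain σ m k) = ∑ k, m k := by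
  simp only [Finsupp.equivMapDomain_apply]
  exact Equiv.sum_comp σ.symm (fun k => m k)

lemma equivMapDomain_expOf {n : ℕ} (σ : Equiv.Perm (Fin n)) (S : Finset (Fin n)) :
    Finsupp.equivMapDomain σ (expOf S) = expOf (S.image σ) := by
  classical
  ext k
  rw [Finsupp.equivMapDomain_apply, expOf_apply, expOf_apply]
  congr 1
  simp only [Finset.mem_image, eq_iff_iff]
  constructor
  · intro hh; exact ⟨σ.symm k, hh, by simp⟩
  · rintro ⟨a, ha, rfl⟩; simpa using ha

lemma image_swap_T {n : ℕ} {T' : Finset (Fin n)} {i j : Fin n} (hij : i ≠ j)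
    (hiT' : i ∈ T') (hjT' : j ∉ T') :
    (insert j (T'.erase i)).image (Equiv.swap i j) = T' := by
  classical
  ext a
  simp only [Finset.mem_image]
  constructor
  · rintro ⟨b, hb, rfl⟩
    rcases Finset.mem_insert.mp hb with rfl | hb
    · simpa [Equiv.swap_apply_right] using hiT'
    · have hbi : b ≠ i := Finset.ne_of_mem_erase hb
      have hbj : b ≠ j := fun hh => hjT' (hh ▸ Finset.mem_of_mem_erase hb)
      rw [Equiv.swap_apply_of_ne_of_ne hbi hbj]
      exact Finset.mem_of_mem_erase hb
  · intro ha
    rcases eq_or_ne a i with rfl | hai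
    · exact ⟨j, Finset.mem_insert_self _ _, by simp⟩
    · have haj : a ≠ j := fun hh => hjT' (hh ▸ ha)
      exact ⟨a, Finset.mem_insert_of_mem (Finset.mem_erase.mpr ⟨hai, ha⟩),
        Equiv.swap_apply_of_ne_of_ne hai haj⟩

lemma coeff_tau {n : ℕ} (θ : ℝ) (i j : Fin n) (h : MvPolynomial (Fin n) ℂ) (m : Fin n →₀ ℕ) :
    coeff m ((1-θ:ℂ) • h + (θ:ℂ) • rename (Equiv.swap i j) h)
      = (1-θ:ℂ) * coeff m h + (θ:ℂ) * coeff (Finsupp.equivMapDomain (Equiv.swap i j) m) h := by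
  rw [coeff_add, coeff_smul, coeff_smul, coeff_rename_swap]
  simp [smul_eq_mul]


lemma isStable_tau {n : ℕ} (h : MvPolynomial (Fin n) ℂ)
    (hma : ∀ m ∈ h.support, ∀ k, m k ≤ 1) (hst : IsStable h)
    (i j : Fin n) (hij : i ≠ j) (θ : ℝ) (hθ0 : 0 ≤ θ) (hθ1 : θ ≤ 1) :
    IsStable ((1-θ:ℂ) • h + (θ:ℂ) • rename (Equiv.swap i j) h) := by
  classical
  rcases hst with h0 | hst
  · left; simp [h0]
  · right
    intro u hu he
    set G : ℂ → ℂ → ℂ := fun z w => eval (Function.update (Function.update u i z) j w) h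
      with hGdef
    set a := G 0 0
    set b := G 1 0 - G 0 0
    set c := G 0 1 - G 0 0
    set d := G 1 1 - G 1 0 - G 0 1 + G 0 0
    have hG : ∀ z w, G z w = a + b*z + c*w + d*(z*w) := by
      intro z w
      have step1 : G z w = G z 0 + w * (G z 1 - G z 0) :=
        eval_update_affine h j (fun m hm => hma m hm j) (Function.update u i z) w
      have step2 : ∀ w0 : ℂ, G z w0 = G 0 w0 + z * (G 1 w0 - G 0 w0) := by
        intro w0
        have hc : ∀ y : ℂ, Function.update (Function.update u i y) j w0
            = Function.update (Function.update u j w0) i y := fun y =>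
          Function.update_comm hij y w0 u
        show eval (Function.update (Function.update u i z) j w0) h = _
        rw [hc]
        have := eval_update_affine h i (fun m hm => hma m hm i)
          (Function.update u j w0) z
        rw [this]
        simp only [hGdef, hc]
      rw [step1, step2 0, step2 1]
      ring
    have hF : ∀ z w : ℂ, 0 < z.im → 0 < w.im → a + b*z + c*w + d*(z*w) ≠ 0 := by
      intro z w hz hw
      rw [← hG]
      apply hst
      intro k
      rcases eq_or_ne k j with rfl | hkj
      · simpa using hw
      · rcases eq_or_ne k i with rfl | hki
        · rw [Function.update_of_ne hkj, Function.update_self]; exact hz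
        · rw [Function.update_of_ne hkj, Function.update_of_ne hki]; exact hu k
    have e1 : eval u h = G (u i) (u j) := by
      rw [hGdef]
      simp only [Function.update_eq_self]
    have e2 : eval (u ∘ (Equiv.swap i j)) h = G (u j) (u i) := by
      have : (u ∘ (Equiv.swap i j)) = Function.update (Function.update u i (u j)) j (u i) := by
        funext k
        rcases eq_or_ne k j with rfl | hkj
        · simp [Equiv.swap_apply_right]
        · rcases eq_or_ne k i with rfl | hki
          · simp [Equiv.swap_apply_left, Function.update_of_ne hij]
          · rw [Function.comp_apply, Equiv.swap_apply_of_ne_of_ne hki hkj,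
              Function.update_of_ne hkj, Function.update_of_ne hki]
      rw [this]
    have he' : (1-θ:ℂ) * G (u i) (u j) + (θ:ℂ) * G (u j) (u i) = 0 := by
      rw [← e1, ← e2]
      rw [map_add] at he
      rw [smul_eq_C_mul, smul_eq_C_mul, eval_mul, eval_mul, eval_C, eval_C, eval_rename] at he
      exact he
    refine lemA a b c d θ hθ0 hθ1 hF (u i) (u j) (hu i) (hu j) ?_
    rw [hG, hG] at he'
    push_cast at he' ⊢
    linear_combination he'


open Classical in
def badSet {n : ℕ} (h : MvPolynomial (Fin n) ℂ) : Finset (Finset (Fin n)) :=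
  Finset.univ.filter
    (fun S => (∃ m ∈ h.support, (∑ k, m k) = S.card) ∧ coeff (expOf S) h = 0)

lemma mem_badSet {n : ℕ} {h : MvPolynomial (Fin n) ℂ} {S : Finset (Fin n)} :
    S ∈ badSet h ↔ (∃ m ∈ h.support, (∑ k, m k) = S.card) ∧ coeff (expOf S) h = 0 := by
  simp [badSet]

lemma main_aux {n : ℕ} (N : ℕ) : ∀ (h : MvPolynomial (Fin n) ℂ),
    (∀ m ∈ h.support, ∀ k, m k ≤ 1) → IsStable h → (badSet h).card ≤ N →
    ∀ ε : ℝ, 0 < ε →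
    ∃ g : MvPolynomial (Fin n) ℂ,
      (∀ m ∈ g.support, ∀ k, m k ≤ 1) ∧ IsStable g ∧
      (∀ m, ‖coeff m h - coeff m g‖ < ε) ∧
      (∀ k : ℕ, (∀ m : Fin n →₀ ℕ, (∑ kk, m kk) = k → coeff m h = 0) →
        ∀ m : Fin n →₀ ℕ, (∑ kk, m kk) = k → coeff m g = 0) ∧
      (∀ k : ℕ, (∃ m ∈ h.support, (∑ kk, m kk) = k) →
        ∀ S : Finset (Fin n), S.card = k → coeff (expOf S) g ≠ 0) := by
  classical
  induction N with
  | zero =>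
    intro h hma hst hcard ε hε
    refine ⟨h, hma, hst, fun m => by simpa using hε, fun k hk m hm => hk m hm, ?_⟩
    intro k hocc S hS hco
    have : S ∈ badSet h := mem_badSet.mpr ⟨by rwa [hS], hco⟩
    have := Finset.card_pos.mpr ⟨S, this⟩
    omega
  | succ N ih =>
    intro h hma hst hcard ε hε
    by_cases hempty : badSet h = ∅
    · refine ⟨h, hma, hst, fun m => by simpa using hε, fun k hk m hm => hk m hm, ?_⟩
      intro k hocc S hS hco
      have : S ∈ badSet h := mem_badSet.mpr ⟨by rwa [hS], hco⟩
      rw [hempty] at this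
      exact absurd this (Finset.notMem_empty S)
    · obtain ⟨S, hS⟩ := Finset.nonempty_iff_ne_empty.mpr hempty
      obtain ⟨⟨m₀, hm₀supp, hm₀sum⟩, hScoeff⟩ := mem_badSet.mp hS
      set k := S.card with hk
      have hm₀ma : ∀ kk, m₀ kk ≤ 1 := hma m₀ hm₀supp
      have hS₀card : m₀.support.card = k := by
        rw [← sum_eq_card_support m₀ hm₀ma]; exact hm₀sum
      have hS₀coeff : coeff (expOf m₀.support) h ≠ 0 := by
        rw [← eq_expOf_support m₀ hm₀ma]
        exact mem_support_iff.mp hm₀supp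
      set A : Finset (Finset (Fin n)) := Finset.univ.filter
        (fun T => T.card = k ∧ coeff (expOf T) h ≠ 0) with hA
      have hS₀A : m₀.support ∈ A := by
        rw [hA, Finset.mem_filter]
        exact ⟨Finset.mem_univ _, hS₀card, hS₀coeff⟩
      have hSA : S ∉ A := by
        rw [hA, Finset.mem_filter]
        rintro ⟨-, -, hc⟩
        exact hc hScoeff
      obtain ⟨T', T, i, j, hT'A, hTA, hT'card, hTcard, hiT', hjT', hiT, hjT, hij, hTeq⟩ :=
        comb A (m₀.support \ S).card m₀.support S le_rfl (by rw [hS₀card]) hS₀A hSA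
      have hT'coeff : coeff (expOf T') h ≠ 0 := by
        rw [hA, Finset.mem_filter] at hT'A
        exact hT'A.2.2
      have hTcoeff : coeff (expOf T) h = 0 := by
        rw [hA, Finset.mem_filter] at hTA
        push_neg at hTA
        exact hTA (Finset.mem_univ T) hTcard
      -- the bound M and the choice of θ
      set M : ℝ := ∑ m ∈ h.support, ‖coeff m h‖ with hM
      have hMnn : 0 ≤ M :=
        Finset.sum_nonneg fun m _ => norm_nonneg _
      have habs_le : ∀ m, ‖coeff m h‖ ≤ M := by
        intro m
        by_cases hm : m ∈ h.support
        · exact Finset.single_le_sum (fun x _ => norm_nonneg _) hm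
        · rw [notMem_support_iff.mp hm]
          simpa using hMnn
      set δ : ℝ := min 1 (ε/(2*(2*M+1))) with hδ
      have hδpos : 0 < δ := by
        apply lt_min one_pos
        positivity
      set sm : (Fin n →₀ ℕ) → (Fin n →₀ ℕ) := fun m =>
        Finsupp.equivMapDomain (Equiv.swap i j) m with hsm
      set B : Finset ℝ := h.support.image
        (fun m => ((coeff m h)/(coeff m h - coeff (sm m) h)).re) with hB
      obtain ⟨θ, hθmem⟩ : ∃ θ, θ ∈ Set.Ioo (0:ℝ) δ \ ↑B :=
        ((Set.Ioo_infinite hδpos).diff (B.finite_toSet)).nonempty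
      obtain ⟨⟨hθ0, hθδ⟩, hθB⟩ := hθmem
      have hθ1 : θ ≤ 1 := le_of_lt (lt_of_lt_of_le hθδ (min_le_left _ _))
      set h' : MvPolynomial (Fin n) ℂ :=
        (1-θ:ℂ) • h + (θ:ℂ) • rename (Equiv.swap i j) h with hh'
      have hcoeff' : ∀ m, coeff m h' = (1-θ:ℂ) * coeff m h + (θ:ℂ) * coeff (sm m) h :=
        fun m => coeff_tau θ i j h m
      -- (c2) nonzero coefficients are preserved
      have hpres : ∀ m, coeff m h ≠ 0 → coeff m h' ≠ 0 := by
        intro m hm hzero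
        rw [hcoeff' m] at hzero
        by_cases hcc : coeff (sm m) h = coeff m h
        · rw [hcc] at hzero
          apply hm
          have : (1-θ:ℂ) * coeff m h + (θ:ℂ) * coeff m h = coeff m h := by ring
          rwa [this] at hzero
        · have hdiff : coeff m h - coeff (sm m) h ≠ 0 := fun hc => hcc (by
            have := sub_eq_zero.mp hc; exact this.symm)
          have hθval : (θ:ℂ) = coeff m h / (coeff m h - coeff (sm m) h) := by
            field_simp
            linear_combination -hzero
          apply hθB
          rw [hB]
          simp only [Finset.coe_image, Set.mem_image, Finset.mem_coe]
          refine ⟨m, mem_support_iff.mpr hm, ?_⟩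
          rw [← hθval]
          simp
      -- (c4) the new coefficient
      have hnew : coeff (expOf T) h' ≠ 0 := by
        rw [hcoeff' (expOf T), hTcoeff]
        have : sm (expOf T) = expOf T' := by
          rw [hsm]
          simp only
          rw [equivMapDomain_expOf, hTeq, image_swap_T hij hiT' hjT']
        rw [this, mul_zero, zero_add]
        exact mul_ne_zero (by simpa using ne_of_gt hθ0) hT'coeff
      -- (c3) levels
      have hlevel : ∀ m, coeff m h' ≠ 0 →
          ∃ m'', coeff m'' h ≠ 0 ∧ (∑ kk, m'' kk) = ∑ kk, m kk := by
        intro m hm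
        rw [hcoeff' m] at hm
        by_cases h1 : coeff m h ≠ 0
        · exact ⟨m, h1, rfl⟩
        · push_neg at h1
          rw [h1, mul_zero, zero_add] at hm
          have h2 : coeff (sm m) h ≠ 0 := fun hc => hm (by rw [hc, mul_zero])
          exact ⟨sm m, h2, sum_equivMapDomain _ m⟩
      -- multiaffine of h'
      have hma' : ∀ m ∈ h'.support, ∀ kk, m kk ≤ 1 := by
        intro m hm kk
        have := mem_support_iff.mp hm
        rw [hcoeff' m] at this
        by_cases h1 : coeff m h ≠ 0
        · exact hma m (mem_support_iff.mpr h1) kk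
        · push_neg at h1
          rw [h1, mul_zero, zero_add] at this
          have h2 : coeff (sm m) h ≠ 0 := fun hc => this (by rw [hc, mul_zero])
          have h3 := hma (sm m) (mem_support_iff.mpr h2) (Equiv.swap i j kk)
          rw [hsm] at h3
          simpa using h3
      -- stability
      have hst' : IsStable h' := isStable_tau h hma hst i j hij θ (le_of_lt hθ0) hθ1
      -- badSet decreases
      have hbad' : badSet h' ⊆ (badSet h).erase T := by
        intro S₁ hS₁
        obtain ⟨⟨m₁, hm₁supp, hm₁sum⟩, hS₁coeff⟩ := mem_badSet.mp hS₁
        rw [Finset.mem_erase]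
        constructor
        · intro hST
          rw [hST] at hS₁coeff
          exact hnew hS₁coeff
        · apply mem_badSet.mpr
          obtain ⟨m₂, hm₂, hm₂sum⟩ := hlevel m₁ (mem_support_iff.mp hm₁supp)
          refine ⟨⟨m₂, mem_support_iff.mpr hm₂, by rw [hm₂sum, hm₁sum]⟩, ?_⟩
          by_contra hc
          exact (hpres _ hc) hS₁coeff
      have hTbad : T ∈ badSet h := mem_badSet.mpr ⟨⟨m₀, hm₀supp, by rw [hm₀sum, hTcard]⟩, hTcoeff⟩
      have hcard' : (badSet h').card ≤ N := by
        have h1 := Finset.card_le_card hbad'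
        have h2 : ((badSet h).erase T).card = (badSet h).card - 1 :=
          Finset.card_erase_of_mem hTbad
        have h3 := Finset.card_pos.mpr ⟨T, hTbad⟩
        omega
      -- apply IH
      obtain ⟨g, hgma, hgst, hgclose, hglevels, hgfull⟩ :=
        ih h' hma' hst' hcard' (ε/2) (half_pos hε)
      refine ⟨g, hgma, hgst, ?_, ?_, ?_⟩
      · -- closeness
        intro m
        have step : ‖coeff m h - coeff m h'‖ ≤ ε/2 := by
          have e1 : coeff m h - coeff m h' = (θ:ℂ) * (coeff m h - coeff (sm m) h) := by
            rw [hcoeff' m]; ring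
          rw [e1, norm_mul, Complex.norm_real, Real.norm_eq_abs, abs_of_pos hθ0]
          have e2 : ‖coeff m h - coeff (sm m) h‖ ≤ 2*M + 1 := by
            calc ‖coeff m h - coeff (sm m) h‖
                ≤ ‖coeff m h‖ + ‖coeff (sm m) h‖ :=
                  norm_sub_le _ _
              _ ≤ 2*M + 1 := by
                  have := habs_le m
                  have := habs_le (sm m)
                  linarith
          have e3 : θ ≤ ε/(2*(2*M+1)) := le_of_lt (lt_of_lt_of_le hθδ (min_le_right _ _))
          calc θ * ‖coeff m h - coeff (sm m) h‖ ≤ θ * (2*M+1) := by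
                apply mul_le_mul_of_nonneg_left e2 (le_of_lt hθ0)
            _ ≤ (ε/(2*(2*M+1))) * (2*M+1) := by
                apply mul_le_mul_of_nonneg_right e3 (by linarith)
            _ = ε/2 := by field_simp
        calc ‖coeff m h - coeff m g‖
            = ‖(coeff m h - coeff m h') + (coeff m h' - coeff m g)‖ := by ring_nf
          _ ≤ ‖coeff m h - coeff m h'‖ + ‖coeff m h' - coeff m g‖ :=
              norm_add_le _ _
          _ < ε/2 + ε/2 := by
              have := hgclose m
              linarith
          _ = ε := by ring
      · -- levels
        intro kk hkk m hm
        apply hglevels kk _ m hm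
        intro m' hm'
        rw [hcoeff' m']
        rw [hkk m' hm', hkk (sm m') (by rw [sum_equivMapDomain]; exact hm')]
        ring
      · -- full support
        intro kk hocc S₁ hS₁
        apply hgfull kk _ S₁ hS₁
        obtain ⟨m₁, hm₁, hm₁sum⟩ := hocc
        refine ⟨m₁, ?_, hm₁sum⟩
        exact mem_support_iff.mpr (hpres m₁ (mem_support_iff.mp hm₁))

theorem stable_perturbation_full_support {n : ℕ} (f : MvPolynomial (Fin n) ℂ)
    (hf : MultiAffine f) (hstable : IsStable f) (ε : ℝ) (hε : 0 < ε) :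
    ∃ g : MvPolynomial (Fin n) ℂ, MultiAffine g ∧
      IsStable g ∧
      (∀ m : Fin n →₀ ℕ, ‖(f - g).coeff m‖ < ε) ∧
      (∀ k : ℕ, (∀ m : Fin n →₀ ℕ, (∑ i, m i) = k → f.coeff m = 0) →
        ∀ m : Fin n →₀ ℕ, (∑ i, m i) = k → g.coeff m = 0) ∧
      (∀ k : ℕ, (∃ m ∈ f.support, (∑ i, m i) = k) →
        ∀ S : Finset (Fin n), S.card = k → g.coeff (expOf S) ≠ 0) := by
  classical
  have hma : ∀ m ∈ f.support, ∀ k, m k ≤ 1 := fun m hm k =>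
    (MvPolynomial.degreeOf_le_iff.mp (hf k)) m hm
  obtain ⟨g, hgma, hgst, hclose, hlev, hfull⟩ :=
    main_aux (badSet f).card f hma hstable le_rfl ε hε
  refine ⟨g, ?_, hgst, ?_, hlev, hfull⟩
  · intro i
    rw [MvPolynomial.degreeOf_le_iff]
    intro m hm
    exact hgma m hm i
  · intro m
    rw [coeff_sub]
    exact hclose m
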